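/- Shifting Ŵ on the x parameter with error terms: Let Ψ : ℝ → ℝ be convex, Γ > 0, Ŵ(g, x) = −min_d { g·d + Γd²/2 + Ψ(x + d) − Ψ(x) }. Let x_a, x_b ∈ ℝ with δ = x_b − x_a, let g^a ∈ ℝ, and suppose x_b = x' + d₂ where d₂ = d̂(g^b, x') is the proximal step at some point x' with gradient value g^b. Then: Ŵ(g^a, x_a) ≥ Ŵ(g^a, x_b) − (3/(2Γ))·(g^b − g^a)² − 2Γ·δ² − (3Γ/2)·(d₂)². -/

import Mathlib

/-- Subgradient inequality extracted from the proximal optimality condition: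
`-(g + Γ d₀)` is a subgradient of `Ψ` at `x + d₀` where `d₀ = dhat g x`. -/
lemma What_subgrad_aux
    (Ψ : ℝ → ℝ) (hΨ : ConvexOn ℝ Set.univ Ψ) (Γ : ℝ) (hΓ : 0 < Γ)
    (dhat : ℝ → ℝ → ℝ)
    (hdhat : ∀ g x d : ℝ,
      g * dhat g x + Γ * (dhat g x) ^ 2 / 2 + Ψ (x + dhat g x) - Ψ x
        ≤ g * d + Γ * d ^ 2 / 2 + Ψ (x + d) - Ψ x)
    (g x d : ℝ) :
    Ψ (x + dhat g x) - Ψ (x + d)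
      ≤ (g + Γ * dhat g x) * (d - dhat g x) := by
  set d0 := dhat g x with hd0
  have key : ∀ t : ℝ, 0 < t → t ≤ 1 →
      Ψ (x + d0) - Ψ (x + d)
        ≤ (g + Γ * d0) * (d - d0) + Γ * t * (d - d0) ^ 2 / 2 := by
    intro t ht ht1
    have hconv := hΨ.2 (Set.mem_univ (x + d0)) (Set.mem_univ (x + d))
      (by linarith : (0:ℝ) ≤ 1 - t) (le_of_lt ht) (by ring)
    have heq : (1 - t) • (x + d0) + t • (x + d) = x + (d0 + t * (d - d0)) := by
      simp only [smul_eq_mul]; ring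
    rw [heq] at hconv
    simp only [smul_eq_mul] at hconv
    have hopt := hdhat g x (d0 + t * (d - d0))
    rw [← hd0] at hopt
    have h2 : t * (Ψ (x + d0) - Ψ (x + d))
        ≤ t * ((g + Γ * d0) * (d - d0) + Γ * t * (d - d0) ^ 2 / 2) := by
      nlinarith [hopt, hconv]
    exact le_of_mul_le_mul_left h2 ht
  refine le_of_forall_pos_le_add ?_
  intro ε hε
  set C := Γ * (d - d0) ^ 2 / 2 with hC
  have hC0 : 0 ≤ C := by positivity
  have ht : 0 < min 1 (ε / (C + 1)) := lt_min one_pos (by positivity)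
  have ht1 : min 1 (ε / (C + 1)) ≤ 1 := min_le_left _ _
  have hk := key _ ht ht1
  have htC : Γ * min 1 (ε / (C + 1)) * (d - d0) ^ 2 / 2 ≤ ε := by
    have h1 : Γ * min 1 (ε / (C + 1)) * (d - d0) ^ 2 / 2
        = min 1 (ε / (C + 1)) * C := by rw [hC]; ring
    rw [h1]
    have h2 : min 1 (ε / (C + 1)) * C ≤ (ε / (C + 1)) * C :=
      mul_le_mul_of_nonneg_right (min_le_right _ _) hC0
    have h3 : (ε / (C + 1)) * C ≤ ε := by
      rw [div_mul_eq_mul_div, div_le_iff₀ (by linarith : (0:ℝ) < C + 1)]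
      nlinarith
    linarith
  linarith

/-- Key shifting inequality for `Ŵ` on the `x` parameter with error terms:
if `x_b = x' + d₂` where `d₂ = d̂(g_b, x')` is a proximal step, then with `δ = x_b − x_a`,
`Ŵ(g_a, x_a) ≥ Ŵ(g_a, x_b) − (3/(2Γ))(g_b − g_a)² − 2Γ δ² − (3Γ/2) d₂²`. -/
theorem What_key_shift
    (Ψ : ℝ → ℝ) (hΨ : ConvexOn ℝ Set.univ Ψ) (Γ : ℝ) (hΓ : 0 < Γ)
    (dhat : ℝ → ℝ → ℝ)
    (hdhat : ∀ g x d : ℝ,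
      g * dhat g x + Γ * (dhat g x) ^ 2 / 2 + Ψ (x + dhat g x) - Ψ x
        ≤ g * d + Γ * d ^ 2 / 2 + Ψ (x + d) - Ψ x)
    (ga gb xa xb x' : ℝ) (hxb : xb = x' + dhat gb x') :
    -(ga * dhat ga xa + Γ * (dhat ga xa) ^ 2 / 2 + Ψ (xa + dhat ga xa) - Ψ xa)
      ≥ -(ga * dhat ga xb + Γ * (dhat ga xb) ^ 2 / 2 + Ψ (xb + dhat ga xb) - Ψ xb)
        - 3 / (2 * Γ) * (gb - ga) ^ 2 - 2 * Γ * (xb - xa) ^ 2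
        - 3 * Γ / 2 * (dhat gb x') ^ 2 := by
  set d2 := dhat gb x' with hd2
  set db := dhat ga xb with hdb
  set da := dhat ga xa with hda
  -- (A) subgradient inequality moving from xb to xa
  have hA := What_subgrad_aux Ψ hΨ Γ hΓ dhat hdhat gb x' (d2 + (xa - xb))
  rw [← hd2] at hA
  have e1 : x' + d2 = xb := hxb.symm
  have e2 : x' + (d2 + (xa - xb)) = xa := by rw [hxb]; ring
  rw [e1, e2] at hA
  -- (B1) subgradient at (ga, xb) tested at 0
  have hB1 := What_subgrad_aux Ψ hΨ Γ hΓ dhat hdhat ga xb 0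
  rw [← hdb] at hB1
  rw [add_zero] at hB1
  -- (B2) subgradient at (gb, x') tested at d2 + db
  have hB2 := What_subgrad_aux Ψ hΨ Γ hΓ dhat hdhat gb x' (d2 + db)
  rw [← hd2] at hB2
  have e3 : x' + (d2 + db) = xb + db := by rw [hxb]; ring
  rw [e1, e3] at hB2
  -- (B): Γ db² ≤ (gb - ga + Γ d2) db
  have hB : Γ * db ^ 2 ≤ (gb - ga + Γ * d2) * db := by nlinarith [hB1, hB2]
  -- (C): optimality of da against db + (xb - xa)
  have hC := hdhat ga xa (db + (xb - xa))
  rw [← hda] at hC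
  have e4 : xa + (db + (xb - xa)) = xb + db := by ring
  rw [e4] at hC
  -- cleared-of-division main inequality
  have hfinal : 0 ≤ 2 * Γ *
      (-(ga * da + Γ * da ^ 2 / 2 + Ψ (xa + da) - Ψ xa)
        - (-(ga * db + Γ * db ^ 2 / 2 + Ψ (xb + db) - Ψ xb))
        + 2 * Γ * (xb - xa) ^ 2 + 3 * Γ / 2 * d2 ^ 2)
      + 3 * (gb - ga) ^ 2 := by
    have hQ : 0 ≤ Γ * ((gb - ga + Γ * d2) * db - Γ * db ^ 2) :=
      mul_nonneg hΓ.le (by linarith [hB])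
    nlinarith [hA, hC, hQ, hΓ,
      sq_nonneg (3 * Γ * (xb - xa) + Γ * d2 + (gb - ga) - Γ * db),
      sq_nonneg (8 * Γ * d2 - (gb - ga) - 2 * Γ * db),
      sq_nonneg (7 * (gb - ga) - 2 * Γ * db),
      sq_nonneg (Γ * db)]
  rw [ge_iff_le, ← sub_nonneg]
  have h2Γ : (0:ℝ) < 2 * Γ := by linarith
  rw [← mul_nonneg_iff_of_pos_left h2Γ]
  have hcancel : 2 * Γ * (3 / (2 * Γ) * (gb - ga) ^ 2) = 3 * (gb - ga) ^ 2 := by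
    field_simp
  have heq : 2 * Γ *
      (-(ga * da + Γ * da ^ 2 / 2 + Ψ (xa + da) - Ψ xa) -
        (-(ga * db + Γ * db ^ 2 / 2 + Ψ (xb + db) - Ψ xb)
          - 3 / (2 * Γ) * (gb - ga) ^ 2 - 2 * Γ * (xb - xa) ^ 2
          - 3 * Γ / 2 * d2 ^ 2)) =
      2 * Γ *
      (-(ga * da + Γ * da ^ 2 / 2 + Ψ (xa + da) - Ψ xa)
        - (-(ga * db + Γ * db ^ 2 / 2 + Ψ (xb + db) - Ψ xb))
        + 2 * Γ * (xb - xa) ^ 2 + 3 * Γ / 2 * d2 ^ 2)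
      + 3 * (gb - ga) ^ 2 := by
    linear_combination hcancel
  rw [heq]
  exact hfinal
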